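/- Let X be a nonempty compact metrizable space with dim X ≤ n. Then there exist a nonempty zero-dimensional compact metrizable space Y and a continuous surjection f : Y → X such that every fiber f⁻¹(x) has at most n+1 points. -/

import Mathlib

universe u

/-- The covering dimension of `X` is at most `n`: every finite open cover has an open
refinement in which every point belongs to at most `n + 1` members. -/
def CovDimLE (X : Type*) [TopologicalSpace X] (n : ℤ) : Prop :=
  ∀ 𝒰 : Set (Set X), 𝒰.Finite → (∀ U ∈ 𝒰, IsOpen U) → ⋃₀ 𝒰 = Set.univ →
    ∃ 𝒱 : Set (Set X), 𝒱.Finite ∧ (∀ V ∈ 𝒱, IsOpen V) ∧ ⋃₀ 𝒱 = Set.univ ∧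
      (∀ V ∈ 𝒱, ∃ U ∈ 𝒰, V ⊆ U) ∧
      ∀ x : X, ({V ∈ 𝒱 | x ∈ V}.ncard : ℤ) ≤ n + 1

/-- A space is zero-dimensional if it has a basis consisting of clopen sets. -/
def ZeroDimensional (X : Type*) [TopologicalSpace X] : Prop :=
  ∃ B : Set (Set X), TopologicalSpace.IsTopologicalBasis B ∧ ∀ U ∈ B, IsClopen U

namespace St5

open Set Metric TopologicalSpace

variable {X : Type u} [MetricSpace X] [CompactSpace X] [Nonempty X]

/-- A "good cover at scale k": finite, open, nonempty members, covering, multiplicity ≤ n+1,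
members of diameter ≤ (1/2)^k. -/
def Good (n k : ℕ) (𝒱 : Set (Set X)) : Prop :=
  𝒱.Finite ∧ (∀ V ∈ 𝒱, IsOpen V) ∧ (∀ V ∈ 𝒱, V.Nonempty) ∧ ⋃₀ 𝒱 = univ ∧
    (∀ x : X, {V | V ∈ 𝒱 ∧ x ∈ V}.ncard ≤ n + 1) ∧
    (∀ V ∈ 𝒱, ∀ a ∈ V, ∀ b ∈ V, dist a b ≤ (1/2 : ℝ) ^ k)

theorem step0 {n : ℕ} (hdim : CovDimLE X n) (k : ℕ) (𝒰 : Set (Set X))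
    (h𝒰f : 𝒰.Finite) (h𝒰o : ∀ U ∈ 𝒰, IsOpen U) (h𝒰c : ⋃₀ 𝒰 = univ) :
    ∃ 𝒱 : Set (Set X), Good n k 𝒱 ∧ ∀ V ∈ 𝒱, ∃ U ∈ 𝒰, closure V ⊆ U := by
  -- Lebesgue number
  obtain ⟨δ, hδ, hleb⟩ := lebesgue_number_lemma_of_metric_sUnion (isCompact_univ (X := X))
    h𝒰o (by rw [h𝒰c])
  set r : ℝ := min (δ/2) ((1/2:ℝ)^k / 2) with hr
  have hr0 : 0 < r := lt_min (by linarith) (by positivity)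
  -- finite subcover of balls of radius r
  obtain ⟨s, hs⟩ := (isCompact_univ (X := X)).elim_finite_subcover (fun x : X => ball x r)
    (fun x => isOpen_ball) (fun x _ => mem_iUnion.2 ⟨x, mem_ball_self hr0⟩)
  have hsne : ∃ x, x ∈ s := by
    obtain ⟨x⟩ := ‹Nonempty X›
    obtain ⟨_, hy⟩ := mem_iUnion₂.1 (hs (mem_univ x))
    exact ⟨_, hy.1⟩
  set 𝒲 : Set (Set X) := (fun x : X => ball x r) '' ↑s with h𝒲
  have h𝒲f : 𝒲.Finite := s.finite_toSet.image _
  have h𝒲o : ∀ W ∈ 𝒲, IsOpen W := by rintro W ⟨x, -, rfl⟩; exact isOpen_ball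
  have h𝒲c : ⋃₀ 𝒲 = univ := by
    apply eq_univ_of_univ_subset
    intro x hx
    obtain ⟨y, hy1, hy2⟩ := mem_iUnion₂.1 (hs hx)
    exact ⟨ball y r, ⟨y, hy1, rfl⟩, hy2⟩
  obtain ⟨𝒱₀, h1, h2, h3, h4, h5⟩ := hdim 𝒲 h𝒲f h𝒲o h𝒲c
  refine ⟨{V | V ∈ 𝒱₀ ∧ V.Nonempty}, ⟨h1.subset fun V hV => hV.1,
    fun V hV => h2 V hV.1, fun V hV => hV.2, ?_, ?_, ?_⟩, fun V hV => ?_⟩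
  · -- still a cover
    apply eq_univ_of_univ_subset
    intro x hx
    rw [← h3] at hx
    obtain ⟨V, hV, hxV⟩ := hx
    exact ⟨V, ⟨hV, ⟨x, hxV⟩⟩, hxV⟩
  · -- multiplicity
    intro x
    have hsub : {V | V ∈ {V | V ∈ 𝒱₀ ∧ V.Nonempty} ∧ x ∈ V} ⊆ {V | V ∈ 𝒱₀ ∧ x ∈ V} :=
      fun V hV => ⟨hV.1.1, hV.2⟩
    have hmono := Set.ncard_le_ncard hsub (h1.subset fun V hV => hV.1)
    have h5x : {V | V ∈ 𝒱₀ ∧ x ∈ V}.ncard ≤ n + 1 := by exact_mod_cast h5 x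
    exact le_trans hmono h5x
  · -- diameter
    rintro V ⟨hV, -⟩ a ha b hb
    obtain ⟨W, ⟨x, -, rfl⟩, hVW⟩ := h4 V hV
    have h1 : dist a x < r := mem_ball.1 (hVW ha)
    have h2 : dist b x < r := mem_ball.1 (hVW hb)
    have : r ≤ (1/2:ℝ)^k / 2 := min_le_right _ _
    calc dist a b ≤ dist a x + dist x b := dist_triangle _ _ _
      _ ≤ r + r := by rw [dist_comm x b]; linarith
      _ ≤ (1/2:ℝ)^k := by linarith
  · -- closure refinement
    obtain ⟨W, ⟨x, -, rfl⟩, hVW⟩ := h4 V hV.1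
    obtain ⟨U, hU, hxU⟩ := hleb x (mem_univ x)
    refine ⟨U, hU, ?_⟩
    have hcl : closure V ⊆ closedBall x r :=
      (closure_mono hVW).trans (by simpa using closure_ball_subset_closedBall)
    refine hcl.trans (fun y hy => hxU ?_)
    have : r < δ := lt_of_le_of_lt (min_le_left _ _) (by linarith)
    exact mem_ball.2 (lt_of_le_of_lt (mem_closedBall.1 hy) this)

theorem step {n : ℕ} (hdim : CovDimLE X n) (k : ℕ) (𝒰 : Set (Set X)) :
    ∃ 𝒱 : Set (Set X), Good n k 𝒱 ∧
      ((𝒰.Finite ∧ (∀ U ∈ 𝒰, IsOpen U) ∧ ⋃₀ 𝒰 = univ) →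
        ∀ V ∈ 𝒱, ∃ U ∈ 𝒰, closure V ⊆ U) := by
  by_cases h𝒰 : 𝒰.Finite ∧ (∀ U ∈ 𝒰, IsOpen U) ∧ ⋃₀ 𝒰 = univ
  · obtain ⟨𝒱, h1, h2⟩ := step0 hdim k 𝒰 h𝒰.1 h𝒰.2.1 h𝒰.2.2
    exact ⟨𝒱, h1, fun _ => h2⟩
  · obtain ⟨𝒱, h1, h2⟩ := step0 hdim k {univ} (finite_singleton _)
      (by rintro U rfl; exact isOpen_univ) (by simp)
    exact ⟨𝒱, h1, fun h => absurd h h𝒰⟩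

/-- The next cover, as a function. -/
noncomputable def nxt {n : ℕ} (hdim : CovDimLE X n) (k : ℕ) (𝒰 : Set (Set X)) : Set (Set X) :=
  (step hdim k 𝒰).choose

theorem nxt_good {n : ℕ} (hdim : CovDimLE X n) (k : ℕ) (𝒰 : Set (Set X)) :
    Good n k (nxt hdim k 𝒰) :=
  (step hdim k 𝒰).choose_spec.1

theorem nxt_link {n : ℕ} (hdim : CovDimLE X n) (k : ℕ) (𝒰 : Set (Set X))
    (h : 𝒰.Finite ∧ (∀ U ∈ 𝒰, IsOpen U) ∧ ⋃₀ 𝒰 = univ) :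
    ∀ V ∈ nxt hdim k 𝒰, ∃ U ∈ 𝒰, closure V ⊆ U :=
  (step hdim k 𝒰).choose_spec.2 h

/-- The sequence of covers. -/
noncomputable def seq {n : ℕ} (hdim : CovDimLE X n) : ℕ → Set (Set X)
  | 0 => nxt hdim 0 ∅
  | (k+1) => nxt hdim (k+1) (seq hdim k)

theorem seq_good {n : ℕ} (hdim : CovDimLE X n) (k : ℕ) : Good n k (seq hdim k) := by
  cases k with
  | zero => exact nxt_good hdim 0 ∅
  | succ k => exact nxt_good hdim (k+1) (seq hdim k)

theorem seq_link {n : ℕ} (hdim : CovDimLE X n) (k : ℕ) :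
    ∀ V ∈ seq hdim (k+1), ∃ U ∈ seq hdim k, closure V ⊆ U := by
  have hg := seq_good hdim k
  show ∀ V ∈ nxt hdim (k+1) (seq hdim k), _
  exact nxt_link hdim (k+1) (seq hdim k) ⟨hg.1, hg.2.1, hg.2.2.2.1⟩

open scoped Classical in
/-- Parent of a member of the (k+1)-st cover in the k-th cover. -/
noncomputable def par {n : ℕ} (hdim : CovDimLE X n) (k : ℕ) (V : Set X) : Set X :=
  if h : ∃ U ∈ seq hdim k, closure V ⊆ U then h.choose else ∅

theorem par_spec {n : ℕ} (hdim : CovDimLE X n) (k : ℕ) {V : Set X}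
    (hV : V ∈ seq hdim (k+1)) :
    par hdim k V ∈ seq hdim k ∧ closure V ⊆ par hdim k V := by
  have h : ∃ U ∈ seq hdim k, closure V ⊆ U := seq_link hdim k V hV
  classical
  rw [par]
  rw [dif_pos h]
  exact ⟨h.choose_spec.1, h.choose_spec.2⟩

/-! ### The zero-dimensional space -/

end St5

/-- `Set X` with the discrete topology. -/
def St5.Disc (X : Type u) : Type u := Set X

namespace St5

open Set Metric TopologicalSpace

instance {X : Type u} : TopologicalSpace (Disc X) := ⊥
instance {X : Type u} : DiscreteTopology (Disc X) := ⟨rfl⟩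

/-- Convert a set into a point of `Disc X`. -/
def Disc.mk {X : Type u} (s : Set X) : Disc X := s

/-- Convert a point of `Disc X` into a set. -/
def Disc.toSet {X : Type u} (s : Disc X) : Set X := s

theorem Disc.toSet_mk {X : Type u} (s : Set X) : (Disc.mk s).toSet = s := rfl

theorem Disc.toSet_injective {X : Type u} : Function.Injective (Disc.toSet (X := X)) :=
  fun _ _ h => h

section Key

variable {X : Type u} [MetricSpace X] [CompactSpace X] [Nonempty X] {n : ℕ}

/-- The inverse limit of the sequence of covers. -/
def Lim (hdim : CovDimLE X n) : Set (ℕ → Disc X) :=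
  {σ | (∀ k, (σ k).toSet ∈ seq hdim k) ∧
       ∀ k, par hdim k ((σ (k+1)).toSet) = (σ k).toSet}

variable {hdim : CovDimLE X n}

theorem lim_closure_sub {σ : ℕ → Disc X} (hσ : σ ∈ Lim hdim) (k : ℕ) :
    closure ((σ (k+1)).toSet) ⊆ (σ k).toSet :=
  hσ.2 k ▸ (par_spec hdim k (hσ.1 (k+1))).2

theorem lim_inter_nonempty {σ : ℕ → Disc X} (hσ : σ ∈ Lim hdim) :
    (⋂ k, closure ((σ k).toSet)).Nonempty := by
  apply IsCompact.nonempty_iInter_of_sequence_nonempty_isCompact_isClosed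
  · intro k
    exact (lim_closure_sub hσ k).trans subset_closure
  · intro k
    exact ((seq_good hdim k).2.2.1 _ (hσ.1 k)).closure
  · exact isClosed_closure.isCompact
  · intro k; exact isClosed_closure

/-- The limit map. -/
noncomputable def lf (hdim : CovDimLE X n) (σ : ↥(Lim hdim)) : X :=
  (lim_inter_nonempty σ.2).some

theorem lf_mem (σ : ↥(Lim hdim)) (k : ℕ) : lf hdim σ ∈ ((σ : ℕ → Disc X) k).toSet :=
  lim_closure_sub σ.2 k (Set.mem_iInter.1 (lim_inter_nonempty σ.2).some_mem (k+1))

theorem lf_dist (σ : ↥(Lim hdim)) (k : ℕ) {y : X} (hy : y ∈ ((σ : ℕ → Disc X) k).toSet) :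
    dist (lf hdim σ) y ≤ (1/2 : ℝ) ^ k :=
  (seq_good hdim k).2.2.2.2.2 _ (σ.2.1 k) _ (lf_mem σ k) y hy

theorem lf_eq (σ : ↥(Lim hdim)) {x : X} (hx : ∀ k, x ∈ ((σ : ℕ → Disc X) k).toSet) :
    lf hdim σ = x := by
  have h : ∀ k, dist (lf hdim σ) x ≤ (1/2 : ℝ) ^ k := fun k => lf_dist σ k (hx k)
  have h0 : dist (lf hdim σ) x ≤ 0 :=
    ge_of_tendsto' (tendsto_pow_atTop_nhds_zero_of_lt_one (by norm_num) (by norm_num)) h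
  exact dist_le_zero.1 h0

theorem lim_agree_below {σ τ : ℕ → Disc X} (hσ : σ ∈ Lim hdim) (hτ : τ ∈ Lim hdim)
    {k : ℕ} (h : σ k = τ k) : ∀ j ≤ k, σ j = τ j := by
  induction k with
  | zero =>
    intro j hj
    obtain rfl : j = 0 := Nat.le_zero.1 hj
    exact h
  | succ k ih =>
    have hk : σ k = τ k := by
      apply Disc.toSet_injective
      rw [← hσ.2 k, ← hτ.2 k, h]
    intro j hj
    rcases Nat.lt_succ_iff_lt_or_eq.1 (Nat.lt_succ_of_le hj) with h' | h'
    · exact ih hk j (by omega)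
    · rw [h']; exact h

theorem lim_ne_above {σ τ : ℕ → Disc X} (hσ : σ ∈ Lim hdim) (hτ : τ ∈ Lim hdim)
    {k : ℕ} (h : σ k ≠ τ k) : ∀ K, k ≤ K → σ K ≠ τ K := by
  intro K hK hKeq
  exact h (lim_agree_below hσ hτ hKeq k hK)

theorem seq_cover (hdim : CovDimLE X n) (x : X) (k : ℕ) :
    ∃ V, V ∈ seq hdim k ∧ x ∈ V := by
  have hc := (seq_good hdim k).2.2.2.1
  have : x ∈ ⋃₀ seq hdim k := by rw [hc]; trivial
  obtain ⟨V, hV, hxV⟩ := this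
  exact ⟨V, hV, hxV⟩

theorem reach (hdim : CovDimLE X n) (x : X) :
    ∃ σ : ℕ → Disc X, σ ∈ Lim hdim ∧ ∀ k, x ∈ (σ k).toSet := by
  classical
  set K' : Set (ℕ → Disc X) := Set.pi Set.univ (fun k => Disc.toSet ⁻¹' (seq hdim k))
    with hK'
  have hK'c : IsCompact K' := isCompact_univ_pi (fun k =>
    ((seq_good hdim k).1.preimage Disc.toSet_injective.injOn).isCompact)
  set G : ℕ → Set (ℕ → Disc X) :=
    fun k => {σ | Disc.mk (par hdim k ((σ (k+1)).toSet)) = σ k} with hG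
  have hGcl : ∀ k, IsClosed (G k) := by
    intro k
    have hc : Continuous (fun σ : ℕ → Disc X => Disc.mk (par hdim k ((σ (k+1)).toSet))) := by
      have h1 : Continuous (fun d : Disc X => Disc.mk (par hdim k d.toSet)) :=
        continuous_of_discreteTopology
      exact h1.comp (continuous_apply (k+1))
    exact isClosed_eq hc (continuous_apply k)
  set H : ℕ → Set (ℕ → Disc X) :=
    fun k => (fun σ : ℕ → Disc X => σ k) ⁻¹' {d : Disc X | x ∈ d.toSet} with hH
  have hHcl : ∀ k, IsClosed (H k) := fun k =>
    (isClosed_discrete {d : Disc X | x ∈ d.toSet}).preimage (continuous_apply k)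
  set E : ℕ → Set (ℕ → Disc X) :=
    fun N => K' ∩ ⋂ k, ⋂ (_ : k ≤ N), (G k ∩ H k) with hE
  have hEcl : ∀ N, IsClosed (⋂ k, ⋂ (_ : k ≤ N), (G k ∩ H k)) := fun N =>
    isClosed_iInter fun k => isClosed_iInter fun _ => (hGcl k).inter (hHcl k)
  have hEdec : ∀ N, E (N+1) ⊆ E N := by
    intro N σ hσ
    refine ⟨hσ.1, Set.mem_iInter.2 fun k => Set.mem_iInter.2 fun hk => ?_⟩
    exact Set.mem_iInter.1 (Set.mem_iInter.1 hσ.2 k) (by omega)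
  have hEne : ∀ N, (E N).Nonempty := by
    intro N
    obtain ⟨V, hV, hxV⟩ := seq_cover hdim x (N+1)
    set g : ℕ → Set X := fun m => Nat.rec V (fun m prev => par hdim (N - m) prev) m with hgdef
    have hg : ∀ m, m ≤ N+1 → g m ∈ seq hdim (N+1-m) ∧ x ∈ g m := by
      intro m
      induction m with
      | zero => intro _; exact ⟨hV, hxV⟩
      | succ m ih =>
        intro hm
        obtain ⟨hmem, hx⟩ := ih (by omega)
        have hidx : N+1-m = (N-m)+1 := by omega
        rw [hidx] at hmem
        have hp := par_spec hdim (N-m) hmem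
        have hgm : g (m+1) = par hdim (N-m) (g m) := rfl
        constructor
        · rw [hgm, show N+1-(m+1) = N-m from by omega]; exact hp.1
        · rw [hgm]; exact hp.2 (subset_closure hx)
    set σf : ℕ → Disc X :=
      fun j => if j ≤ N+1 then Disc.mk (g (N+1-j)) else Disc.mk (seq_cover hdim x j).choose
      with hσf
    have hσfle : ∀ j, j ≤ N+1 → σf j = Disc.mk (g (N+1-j)) := by
      intro j hj; simp only [hσf, if_pos hj]
    refine ⟨σf, ?_, Set.mem_iInter.2 fun k => Set.mem_iInter.2 fun hk => ⟨?_, ?_⟩⟩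
    · -- membership in K'
      intro k _
      show (σf k).toSet ∈ seq hdim k
      by_cases hkN : k ≤ N+1
      · rw [hσfle k hkN, Disc.toSet_mk]
        have := (hg (N+1-k) (by omega)).1
        rwa [show N+1-(N+1-k) = k from by omega] at this
      · simp only [hσf, if_neg hkN, Disc.toSet_mk]
        exact (seq_cover hdim x k).choose_spec.1
    · -- G k for k ≤ N
      show Disc.mk (par hdim k ((σf (k+1)).toSet)) = σf k
      rw [hσfle (k+1) (by omega), hσfle k (by omega), Disc.toSet_mk]
      rw [show N+1-(k+1) = N-k from by omega]
      rw [show N+1-k = (N-k)+1 from by omega]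
      show Disc.mk (par hdim k (g (N-k))) = Disc.mk (par hdim (N - (N-k)) (g (N-k)))
      rw [show N - (N-k) = k from by omega]
    · -- H k for k ≤ N
      show x ∈ (σf k).toSet
      rw [hσfle k (by omega), Disc.toSet_mk]
      exact (hg (N+1-k) (by omega)).2
  have hint : (⋂ N, E N).Nonempty := by
    apply IsCompact.nonempty_iInter_of_sequence_nonempty_isCompact_isClosed E hEdec hEne
    · exact hK'c.inter_right (hEcl 0)
    · intro N; exact (hK'c.isClosed).inter (hEcl N)
  obtain ⟨σ, hσ⟩ := hint
  have hσE : ∀ N, σ ∈ E N := Set.mem_iInter.1 hσ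
  have hσGH : ∀ k, σ ∈ G k ∧ σ ∈ H k := fun k =>
    Set.mem_iInter.1 (Set.mem_iInter.1 (hσE k).2 k) le_rfl
  refine ⟨σ, ⟨fun k => (hσE 0).1 k (Set.mem_univ k), fun k => ?_⟩, fun k => (hσGH k).2⟩
  exact congrArg Disc.toSet (hσGH k).1


/-- The limit set, described as an intersection of compact/closed pieces. -/
theorem lim_eq (hdim : CovDimLE X n) :
    Lim hdim = (Set.pi Set.univ fun k => Disc.toSet ⁻¹' seq hdim k) ∩
      ⋂ k, {σ : ℕ → Disc X | Disc.mk (par hdim k ((σ (k+1)).toSet)) = σ k} := by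
  ext σ
  constructor
  · rintro ⟨h1, h2⟩
    exact ⟨fun k _ => h1 k, Set.mem_iInter.2 fun k => congrArg Disc.mk (h2 k)⟩
  · rintro ⟨h1, h2⟩
    exact ⟨fun k => h1 k (Set.mem_univ k),
      fun k => congrArg Disc.toSet (Set.mem_iInter.1 h2 k)⟩

theorem lim_compact (hdim : CovDimLE X n) : IsCompact (Lim hdim) := by
  rw [lim_eq]
  apply IsCompact.inter_right
  · exact isCompact_univ_pi (fun k =>
      ((seq_good hdim k).1.preimage Disc.toSet_injective.injOn).isCompact)
  · refine isClosed_iInter fun k => ?_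
    have hc : Continuous (fun σ : ℕ → Disc X => Disc.mk (par hdim k ((σ (k+1)).toSet))) := by
      have h1 : Continuous (fun d : Disc X => Disc.mk (par hdim k d.toSet)) :=
        continuous_of_discreteTopology
      exact h1.comp (continuous_apply (k+1))
    exact isClosed_eq hc (continuous_apply k)

theorem lf_continuous (hdim : CovDimLE X n) : Continuous (lf hdim) := by
  rw [continuous_iff_continuousAt]
  intro σ
  rw [ContinuousAt, Metric.tendsto_nhds]
  intro ε hε
  obtain ⟨K, hK⟩ := exists_pow_lt_of_lt_one hε (show (1/2 : ℝ) < 1 by norm_num)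
  have hopen : IsOpen ((fun τ : ↥(Lim hdim) => (τ : ℕ → Disc X) K) ⁻¹'
      {(σ : ℕ → Disc X) K}) :=
    (isOpen_discrete _).preimage ((continuous_apply K).comp continuous_subtype_val)
  filter_upwards [hopen.mem_nhds rfl] with τ hτ
  have hτK : (τ : ℕ → Disc X) K = (σ : ℕ → Disc X) K := hτ
  have h1 : lf hdim τ ∈ (((σ : ℕ → Disc X)) K).toSet := by
    rw [← hτK]; exact lf_mem τ K
  have h2 : dist (lf hdim σ) (lf hdim τ) ≤ (1/2 : ℝ) ^ K := lf_dist σ K h1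
  rw [dist_comm] at h2
  exact lt_of_le_of_lt h2 hK

theorem lf_surjective (hdim : CovDimLE X n) : Function.Surjective (lf hdim) := by
  intro x
  obtain ⟨σ, hσ, hx⟩ := reach hdim x
  exact ⟨⟨σ, hσ⟩, lf_eq _ hx⟩

theorem lf_fiber (hdim : CovDimLE X n) (x : X) :
    (lf hdim ⁻¹' {x}).encard ≤ (n : ℕ∞) + 1 := by
  classical
  by_contra hcon
  push_neg at hcon
  have hne : ((n : ℕ∞) + 1) ≠ ⊤ := by
    have := ENat.coe_ne_top (n+1)
    rwa [Nat.cast_add, Nat.cast_one] at this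
  have h2 : (n : ℕ∞) + 1 + 1 ≤ (lf hdim ⁻¹' {x}).encard :=
    (ENat.add_one_le_iff hne).2 hcon
  obtain ⟨t, hts, htc⟩ := Set.exists_subset_encard_eq h2
  have htc' : t.encard = ((n+2 : ℕ) : ℕ∞) := by rw [htc]; push_cast; ring
  have htfin : t.Finite := Set.finite_of_encard_eq_coe htc'
  -- a coordinate where all distinct pairs of `t` differ
  set d : ↥(Lim hdim) × ↥(Lim hdim) → ℕ := fun p =>
    if h : ∃ k, (p.1 : ℕ → Disc X) k ≠ (p.2 : ℕ → Disc X) k then h.choose else 0 with hd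
  obtain ⟨K, hK⟩ := ((htfin.prod htfin).image d).bddAbove
  have hdiff : ∀ σ ∈ t, ∀ τ ∈ t, σ ≠ τ →
      (σ : ↥(Lim hdim)).1 K ≠ (τ : ↥(Lim hdim)).1 K := by
    intro σ hσt τ hτt hne'
    have hex : ∃ k, (σ : ℕ → Disc X) k ≠ (τ : ℕ → Disc X) k := by
      by_contra hc
      push_neg at hc
      exact hne' (Subtype.ext (funext hc))
    have hspec : (σ : ℕ → Disc X) (d (σ, τ)) ≠ (τ : ℕ → Disc X) (d (σ, τ)) := by
      simp only [hd, dif_pos hex]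
      exact hex.choose_spec
    have hdK : d (σ, τ) ≤ K :=
      hK (Set.mem_image_of_mem d (Set.mk_mem_prod hσt hτt))
    exact lim_ne_above σ.2 τ.2 hspec K hdK
  set φ : ↥(Lim hdim) → Set X := fun σ => ((σ : ℕ → Disc X) K).toSet with hφ
  have hinj : Set.InjOn φ t := by
    intro σ hσ τ hτ h
    by_contra hne'
    exact hdiff σ hσ τ hτ hne' (Disc.toSet_injective h)
  have himg : φ '' t ⊆ {V | V ∈ seq hdim K ∧ x ∈ V} := by
    rintro _ ⟨σ, hσt, rfl⟩
    refine ⟨σ.2.1 K, ?_⟩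
    have hfx : lf hdim σ = x := hts hσt
    rw [← hfx]
    exact lf_mem σ K
  have hSfin : {V | V ∈ seq hdim K ∧ x ∈ V}.Finite :=
    (seq_good hdim K).1.subset (fun V hV => hV.1)
  have hScard : {V | V ∈ seq hdim K ∧ x ∈ V}.encard ≤ ((n+1 : ℕ) : ℕ∞) := by
    have hmult := (seq_good hdim K).2.2.2.2.1 x
    have hcard : hSfin.toFinset.card ≤ n + 1 := by
      rw [← Set.ncard_eq_toFinset_card _ hSfin]
      exact hmult
    rw [hSfin.encard_eq_coe_toFinset_card]
    exact_mod_cast hcard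
  have hfinal : ((n+2 : ℕ) : ℕ∞) ≤ ((n+1 : ℕ) : ℕ∞) := by
    calc ((n+2 : ℕ) : ℕ∞) = t.encard := htc'.symm
      _ = (φ '' t).encard := (hinj.encard_image).symm
      _ ≤ {V | V ∈ seq hdim K ∧ x ∈ V}.encard := Set.encard_le_encard himg
      _ ≤ ((n+1 : ℕ) : ℕ∞) := hScard
  have : (n+2 : ℕ) ≤ (n+1 : ℕ) := by exact_mod_cast hfinal
  omega

theorem key (n : ℕ) (hdim : CovDimLE X n) :
    ∃ (Y : Type u) (_ : TopologicalSpace Y), Nonempty Y ∧ CompactSpace Y ∧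
      TopologicalSpace.MetrizableSpace Y ∧ ZeroDimensional Y ∧
      ∃ f : Y → X, Continuous f ∧ Function.Surjective f ∧
        ∀ x : X, (f ⁻¹' {x}).encard ≤ n + 1 := by
  haveI hmz : MetrizableSpace (ℕ → Disc X) := by
    letI : MetricSpace (Disc X) := TopologicalSpace.metrizableSpaceMetric (Disc X)
    exact inferInstance
  haveI hcs : CompactSpace ↥(Lim hdim) := isCompact_iff_compactSpace.1 (lim_compact hdim)
  have hnonempty : Nonempty ↥(Lim hdim) := by
    obtain ⟨σ, hσ, -⟩ := reach hdim (Classical.arbitrary X)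
    exact ⟨⟨σ, hσ⟩⟩
  refine ⟨↥(Lim hdim), inferInstance, hnonempty, hcs, inferInstance, ?_,
    lf hdim, lf_continuous hdim, lf_surjective hdim, lf_fiber hdim⟩
  exact ⟨{s | IsClopen s}, isTopologicalBasis_isClopen, fun U hU => hU⟩

end Key

end St5

/-- A nonempty compact metrizable space of covering dimension at most `n` is the continuous
image of a nonempty zero-dimensional compact metrizable space under a map with fibers of
at most `n + 1` points. -/
theorem statement5 {X : Type u} [TopologicalSpace X] [Nonempty X] [CompactSpace X]
    [TopologicalSpace.MetrizableSpace X] (n : ℕ) (hdim : CovDimLE X n) :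
    ∃ (Y : Type u) (_ : TopologicalSpace Y), Nonempty Y ∧ CompactSpace Y ∧
      TopologicalSpace.MetrizableSpace Y ∧ ZeroDimensional Y ∧
      ∃ f : Y → X, Continuous f ∧ Function.Surjective f ∧
        ∀ x : X, (f ⁻¹' {x}).encard ≤ n + 1 := by
  letI : MetricSpace X := TopologicalSpace.metrizableSpaceMetric X
  exact St5.key n hdim
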